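/- Let A ≥ 1, 0 < δ < A, M ≥ 1, r ≥ 1, and let N ∈ ℕ satisfy N > (r-1)A/2 and N > A(2M+1-δ)/δ². Define φ(t) = t·((t/A) - 1 + δ/(2A))^{2N}. Then φ(t) < A/(2N+1) for all t ∈ [0,A], and φ(t) ≤ -2M - (r-1)A/(2N+1) for all t ≤ -δ. -/

import Mathlib

/-- Elementary estimates for `φ(t) = t((t/A) - 1 + δ/(2A))^{2N}`: if `A ≥ 1`, `0 < δ < A`,
`M ≥ 1`, `r ≥ 1`, `N > ((r-1)A)/2` and `N > A(2M+1-δ)/δ²`, then `φ(t) < A/(2N+1)` on `[0,A]`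
and `φ(t) ≤ -2M - (r-1)A/(2N+1)` for `t ≤ -δ`. -/
theorem stmt_19 (A δ M : ℝ) (r : ℕ) (hA : 1 ≤ A) (hδ0 : 0 < δ) (hδA : δ < A)
    (hM : 1 ≤ M) (hr : 1 ≤ r) (N : ℕ)
    (hN1 : ((r : ℝ) - 1) * A / 2 < (N : ℝ))
    (hN2 : A * (2 * M + 1 - δ) / δ ^ 2 < (N : ℝ)) :
    (∀ t ∈ Set.Icc (0 : ℝ) A,
      t * (t / A - 1 + δ / (2 * A)) ^ (2 * N) < A / (2 * (N : ℝ) + 1)) ∧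
    (∀ t : ℝ, t ≤ -δ →
      t * (t / A - 1 + δ / (2 * A)) ^ (2 * N) ≤
        -2 * M - ((r : ℝ) - 1) * A / (2 * (N : ℝ) + 1)) := by
  have hA0 : (0:ℝ) < A := lt_of_lt_of_le one_pos hA
  have hr1 : (1:ℝ) ≤ (r:ℝ) := by exact_mod_cast hr
  have hNpos : (0:ℝ) < (N:ℝ) :=
    lt_of_le_of_lt (by nlinarith [mul_nonneg (sub_nonneg.mpr hr1) hA0.le]) hN1
  have hN1' : 1 ≤ N := by exact_mod_cast Nat.one_le_iff_ne_zero.mpr (by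
    rintro rfl; simp at hNpos)
  have hc : δ / (2*A) < 1/2 := by
    rw [div_lt_div_iff₀ (by linarith) (by norm_num)]; linarith
  have hc0 : 0 < δ / (2*A) := by positivity
  have h2N1 : (0:ℝ) < 2*(N:ℝ)+1 := by linarith
  constructor
  · rintro t ⟨ht0, htA⟩
    set u : ℝ := t / A - 1 + δ / (2*A) with hu
    rcases le_or_gt u 0 with hule | hupos
    · -- u ≤ 0 case
      set v : ℝ := -u with hv
      have hv0 : 0 ≤ v := by simpa [hv] using hule
      have hpow : u ^ (2*N) = v ^ (2*N) := by
        rw [hv, Even.neg_pow (even_two_mul N)]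
      rw [hpow]
      set x : ℝ := t / A with hx
      have hx0 : 0 ≤ x := by positivity
      have htx : t = A * x := by rw [hx]; field_simp
      have hxv : x + v = 1 - δ/(2*A) := by simp [hv, hu, hx]; ring
      rcases eq_or_lt_of_le hv0 with hveq | hvpos
      · rw [← hveq, zero_pow (by omega), mul_zero]
        positivity
      · -- key: (2N+1) * x * v^(2N) < 1
        have hb : x + v ≤ 1 := by rw [hxv]; linarith
        have bern := one_add_mul_le_pow (a := x / v) (by linarith [div_nonneg hx0 hv0]) (2*N+1)
        have hkey : v^(2*N+1) * (1 + (2*N+1:ℕ) * (x/v)) ≤ (x+v)^(2*N+1) := by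
          calc v^(2*N+1) * (1 + (2*N+1:ℕ) * (x/v)) ≤ v^(2*N+1) * (1 + x/v)^(2*N+1) := by
                apply mul_le_mul_of_nonneg_left bern (by positivity)
            _ = (v * (1 + x/v))^(2*N+1) := by rw [mul_pow]
            _ = (x+v)^(2*N+1) := by rw [mul_add, mul_one, mul_div_cancel₀ _ (ne_of_gt hvpos)]; ring_nf
        have hexp : v^(2*N+1) * (1 + (2*N+1:ℕ) * (x/v)) = v^(2*N+1) + (2*(N:ℝ)+1) * (x * v^(2*N)) := by
          push_cast
          field_simp
          ring
        rw [hexp] at hkey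
        have hpow1 : (x+v)^(2*N+1) ≤ 1 := pow_le_one₀ (by positivity) hb
        have hvp : 0 < v^(2*N+1) := pow_pos hvpos _
        have hmain : (2*(N:ℝ)+1) * (x * v^(2*N)) < 1 := by linarith
        rw [htx, lt_div_iff₀ h2N1]
        calc A * x * v^(2*N) * (2*(N:ℝ)+1) = A * ((2*(N:ℝ)+1) * (x * v^(2*N))) := by ring
          _ < A * 1 := by exact mul_lt_mul_of_pos_left hmain hA0
          _ = A := mul_one A
    · -- u > 0 case
      have huc : u ≤ δ/(2*A) := by
        rw [hu]
        have : t / A ≤ 1 := by rw [div_le_one hA0]; exact htA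
        linarith
      have h1 : u ^ (2*N) < (1/2:ℝ) ^ (2*N) := by
        apply pow_lt_pow_left₀ (lt_of_le_of_lt huc hc) (le_of_lt hupos)
        omega
      have h4 : (2*(N:ℝ)+1) ≤ 4^N := by
        have := one_add_mul_le_pow (a := (3:ℝ)) (by norm_num) N
        calc (2*(N:ℝ)+1) ≤ 1 + (N:ℝ)*3 := by linarith
          _ ≤ (1+3:ℝ)^N := this
          _ = 4^N := by norm_num
      have h2 : ((1/2:ℝ)) ^ (2*N) = 1 / 4^N := by
        rw [pow_mul]; norm_num; simp [one_div, inv_pow]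
      have hbnd : t * u ^ (2*N) < A * (1/4^N) := by
        calc t * u^(2*N) ≤ A * u^(2*N) :=
              mul_le_mul_of_nonneg_right htA (by positivity)
          _ < A * (1/2:ℝ)^(2*N) := mul_lt_mul_of_pos_left h1 hA0
          _ = A * (1/4^N) := by rw [h2]
      have h4pos : (0:ℝ) < 4^N := by positivity
      have : A * (1/4^N) ≤ A / (2*(N:ℝ)+1) := by
        rw [mul_one_div, div_le_div_iff₀ h4pos h2N1]
        calc A * (2*(N:ℝ)+1) ≤ A * 4^N := mul_le_mul_of_nonneg_left h4 (le_of_lt hA0)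
          _ = A * 4^N := rfl
      linarith
  · intro t ht
    set u : ℝ := t / A - 1 + δ / (2*A) with hu
    have htA' : t / A ≤ (-δ) / A := by gcongr
    have hule : u ≤ -(1 + δ/(2*A)) := by
      rw [hu]
      have heq : (-δ)/A - 1 + δ/(2*A) = -(1 + δ/(2*A)) := by field_simp; ring
      linarith
    have hup : (1 + δ/(2*A)) ≤ -u := by linarith
    have hpow : (1 + δ/(2*A))^(2*N) ≤ u^(2*N) := by
      calc (1 + δ/(2*A))^(2*N) ≤ (-u)^(2*N) := pow_le_pow_left₀ (by positivity) hup _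
        _ = u^(2*N) := Even.neg_pow (even_two_mul N) u
    have bern : 1 + (N:ℝ) * (δ/A) ≤ (1 + δ/(2*A))^(2*N) := by
      have := one_add_mul_le_pow (a := δ/(2*A)) (by linarith) (2*N)
      have h2 : ((2*N:ℕ):ℝ) * (δ/(2*A)) = (N:ℝ) * (δ/A) := by push_cast; field_simp
      linarith [this, h2.le]
    have hnu : (0:ℝ) ≤ -u := le_trans (by positivity) hup
    have hupow0 : (0:ℝ) ≤ u^(2*N) := by
      rw [← Even.neg_pow (even_two_mul N)]; exact pow_nonneg hnu _
    have step1 : t * u^(2*N) ≤ -δ * u^(2*N) := mul_le_mul_of_nonneg_right ht hupow0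
    have step2 : -δ * u^(2*N) ≤ -δ * (1 + (N:ℝ)*(δ/A)) := by
      have := le_trans bern hpow
      nlinarith
    have key1 : A * (2*M + 1 - δ) < (N:ℝ) * δ^2 := by
      have := (div_lt_iff₀ (by positivity : (0:ℝ) < δ^2)).mp hN2
      linarith
    have key2 : ((r:ℝ)-1) * A / (2*(N:ℝ)+1) ≤ 1 := by
      rw [div_le_one h2N1]; linarith
    have key3 : -δ * (1 + (N:ℝ)*(δ/A)) ≤ -2*M - 1 := by
      have : (N:ℝ)*δ^2/A ≥ 2*M + 1 - δ := by
        rw [ge_iff_le, le_div_iff₀ hA0]; nlinarith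
      have hexp : -δ * (1 + (N:ℝ)*(δ/A)) = -δ - (N:ℝ)*δ^2/A := by field_simp; ring
      linarith
    linarith
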